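/- Let N ≥ 2, η = exp(2πi/N), and let d be an integer with 1 ≤ d ≤ N-1. Then the sum over p from 1 to N-1 of η^{dp}/(η^p - 1) equals N/2 + 1/2 - d. -/

import Mathlib

lemma sumA (N : ℕ) (hN : 2 ≤ N) (ζ : ℂ) (hζ : IsPrimitiveRoot ζ N)
    (d : ℕ) (h1 : 1 ≤ d) (h2 : d ≤ N - 1) :
    ∑ p ∈ Finset.Icc 1 (N - 1), ζ ^ (d * p) = -1 := by
  have hne : ζ ^ d ≠ 1 := hζ.pow_ne_one_of_pos_of_lt (by omega) (by omega)
  have hgeom : ∑ p ∈ Finset.range N, (ζ ^ d) ^ p = 0 := by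
    rw [geom_sum_eq hne]
    rw [← pow_mul, mul_comm, pow_mul, hζ.pow_eq_one, one_pow]
    simp
  have : Finset.Icc 1 (N - 1) = Finset.range N \ {0} := by
    ext x; simp [Finset.mem_Icc, Finset.mem_range]; omega
  rw [this, Finset.sum_sdiff_eq_sub (by simp; omega)]
  simp only [pow_mul] at hgeom ⊢
  rw [hgeom]
  simp

lemma sumB (N : ℕ) (hN : 2 ≤ N) (ζ : ℂ) (hζ : IsPrimitiveRoot ζ N) :
    ∑ p ∈ Finset.Icc 1 (N - 1), (1 : ℂ) / (ζ ^ p - 1) = -((N : ℂ) - 1) / 2 := by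
  have hζ0 : ζ ≠ 0 := hζ.ne_zero (by omega)
  have key : ∀ p ∈ Finset.Icc 1 (N - 1),
      (1 : ℂ) / (ζ ^ p - 1) + 1 / (ζ ^ (N - p) - 1) = -1 := by
    intro p hp
    simp only [Finset.mem_Icc] at hp
    have hne : ζ ^ p ≠ 1 := hζ.pow_ne_one_of_pos_of_lt (by omega) (by omega)
    have hinv : ζ ^ (N - p) = (ζ ^ p)⁻¹ := by
      apply eq_inv_of_mul_eq_one_left
      rw [← pow_add]
      have : N - p + p = N := by omega
      rw [this, hζ.pow_eq_one]
    rw [hinv]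
    set x := ζ ^ p with hx
    have hx0 : x ≠ 0 := pow_ne_zero _ hζ0
    have h1 : x - 1 ≠ 0 := sub_ne_zero.mpr hne
    have h2 : x⁻¹ - 1 = -(x - 1) / x := by
      field_simp
      ring
    rw [h2, one_div_div, div_neg, ← sub_eq_add_neg, div_sub_div_same,
      show (1 : ℂ) - x = -(x - 1) by ring, neg_div, div_self h1]
  have hrev : ∑ p ∈ Finset.Icc 1 (N - 1), (1 : ℂ) / (ζ ^ p - 1)
      = ∑ p ∈ Finset.Icc 1 (N - 1), (1 : ℂ) / (ζ ^ (N - p) - 1) := by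
    apply Finset.sum_nbij' (fun p => N - p) (fun p => N - p)
    · intro a ha; simp only [Finset.mem_Icc] at ha ⊢; omega
    · intro a ha; simp only [Finset.mem_Icc] at ha ⊢; omega
    · intro a ha; simp only [Finset.mem_Icc] at ha; omega
    · intro a ha; simp only [Finset.mem_Icc] at ha; omega
    · intro a ha; simp only [Finset.mem_Icc] at ha
      have : N - (N - a) = a := by omega
      rw [this]
  have h2 : (2 : ℂ) * ∑ p ∈ Finset.Icc 1 (N - 1), (1 : ℂ) / (ζ ^ p - 1)
      = -((N : ℂ) - 1) := by
    rw [two_mul]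
    nth_rewrite 2 [hrev]
    rw [← Finset.sum_add_distrib, Finset.sum_congr rfl key]
    have hc : (Finset.Icc 1 (N - 1)).card = N - 1 := by simp
    rw [Finset.sum_const, hc, nsmul_eq_mul, Nat.cast_pred (by omega)]
    ring
  linear_combination h2 / 2

lemma mainNat (N : ℕ) (hN : 2 ≤ N) (ζ : ℂ) (hζ : IsPrimitiveRoot ζ N) :
    ∀ d : ℕ, 1 ≤ d → d ≤ N - 1 →
    ∑ p ∈ Finset.Icc 1 (N - 1), ζ ^ (d * p) / (ζ ^ p - 1)
      = (N : ℂ) / 2 + 1 / 2 - (d : ℂ) := by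
  intro d hd1
  induction d, hd1 using Nat.le_induction with
  | base =>
    intro _
    have : ∀ p ∈ Finset.Icc 1 (N - 1),
        ζ ^ (1 * p) / (ζ ^ p - 1) = 1 + 1 / (ζ ^ p - 1) := by
      intro p hp
      simp only [Finset.mem_Icc] at hp
      have hne : ζ ^ p - 1 ≠ 0 :=
        sub_ne_zero.mpr (hζ.pow_ne_one_of_pos_of_lt (by omega) (by omega))
      rw [one_mul]
      field_simp
      ring
    rw [Finset.sum_congr rfl this, Finset.sum_add_distrib,
      sumB N hN ζ hζ, Finset.sum_const, Nat.card_Icc]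
    simp only [nsmul_eq_mul, mul_one]
    rw [show N - 1 + 1 - 1 = N - 1 by omega, Nat.cast_pred (by omega)]
    push_cast
    ring
  | succ d hd ih =>
    intro h2
    have ih' := ih (by omega)
    have hstep : ∀ p ∈ Finset.Icc 1 (N - 1),
        ζ ^ ((d + 1) * p) / (ζ ^ p - 1)
          = ζ ^ (d * p) / (ζ ^ p - 1) + ζ ^ (d * p) := by
      intro p hp
      simp only [Finset.mem_Icc] at hp
      have hne : ζ ^ p - 1 ≠ 0 :=
        sub_ne_zero.mpr (hζ.pow_ne_one_of_pos_of_lt (by omega) (by omega))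
      rw [show (d + 1) * p = d * p + p by ring, pow_add]
      field_simp
      ring
    rw [Finset.sum_congr rfl hstep, Finset.sum_add_distrib, ih',
      sumA N hN ζ hζ d hd (by omega)]
    push_cast
    ring

theorem sum_root_pow_div_root_sub_one (N : ℕ) (hN : 2 ≤ N) (d : ℤ)
    (hd1 : 1 ≤ d) (hd2 : d ≤ (N : ℤ) - 1) :
    ∑ p ∈ Finset.Icc 1 (N - 1),
      Complex.exp (2 * Real.pi * Complex.I / N) ^ (d * (p : ℤ)) /
        (Complex.exp (2 * Real.pi * Complex.I / N) ^ p - 1)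
      = (N : ℂ) / 2 + 1 / 2 - (d : ℂ) := by
  have hN0 : (N : ℕ) ≠ 0 := by omega
  have hζ : IsPrimitiveRoot (Complex.exp (2 * Real.pi * Complex.I / N)) N :=
    Complex.isPrimitiveRoot_exp N hN0
  lift d to ℕ using (by omega) with m
  have h1 : 1 ≤ m := by omega
  have h2 : m ≤ N - 1 := by omega
  have := mainNat N hN _ hζ m h1 h2
  push_cast
  rw [← this]
  refine Finset.sum_congr rfl fun p hp => ?_
  rw [show ((m : ℤ) * (p : ℤ)) = ((m * p : ℕ) : ℤ) by push_cast; ring, zpow_natCast]
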